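/- Let H be a complex Hilbert space and H₁, …, Hₙ nonzero, linearly independent closed subspaces of H with orthogonal projections P₁, …, Pₙ. Let α₁, …, αₙ and ε be positive real numbers. If α₁P₁ + … + αₙPₙ ≥ ε·I (as selfadjoint operators), then α₁P₁ + … + αₙPₙ ≤ (Σ_{i=1}^{n} α_i − (n−1)ε)·I. -/

import Mathlib

/-- The orthogonal projection of a Hilbert space `H` onto a complete (closed) subspace `K`,
viewed as a continuous linear operator `H →L[ℂ] H`. -/
noncomputable def proj {H : Type*} [NormedAddCommGroup H] [InnerProductSpace ℂ H]
    (K : Submodule ℂ H) [CompleteSpace K] : H →L[ℂ] H :=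
  K.subtypeL.comp K.orthogonalProjection

open scoped ComplexInnerProductSpace
set_option maxHeartbeats 1000000
set_option synthInstance.maxHeartbeats 1000000
set_option linter.unusedSectionVars false
set_option linter.unusedVariables false
set_option linter.deprecated false

section Aux

variable {H : Type*} [NormedAddCommGroup H] [InnerProductSpace ℂ H] [CompleteSpace H]
  {n : ℕ} (H_ : Fin n → Submodule ℂ H) [∀ i, CompleteSpace (H_ i)]

lemma re_inner_sum (α : Fin n → ℝ) (x : H) :
    ((inner ℂ ((∑ i, (α i : ℂ) • proj (H_ i)) x) x : ℂ)).re
      = ∑ i, α i * ‖((H_ i).orthogonalProjection x : H)‖ ^ 2 := by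
  have key : ∀ i, (inner ℂ ((proj (H_ i)) x) x : ℂ)
      = (‖((H_ i).orthogonalProjection x : H)‖ ^ 2 : ℝ) := by
    intro i
    have h := Submodule.inner_orthogonalProjection_eq_of_mem_left (𝕜 := ℂ)
      (K := H_ i) ((H_ i).orthogonalProjection x) x
    rw [inner_self_eq_norm_sq_to_K] at h
    rw [proj]
    simp only [ContinuousLinearMap.coe_comp', Function.comp_apply, Submodule.subtypeL_apply]
    rw [← h]
    push_cast
    norm_num
  simp only [ContinuousLinearMap.sum_apply, sum_inner, ContinuousLinearMap.smul_apply,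
    inner_smul_left, Complex.re_sum]
  refine Finset.sum_congr rfl (fun i _ => ?_)
  rw [key i, Complex.conj_ofReal, ← Complex.ofReal_mul, Complex.ofReal_re]

lemma L0 (hind : ∀ x : Fin n → H, (∀ i, x i ∈ H_ i) → ∑ i, x i = 0 → ∀ i, x i = 0)
    (α : Fin n → ℝ) (hα : ∀ i, 0 < α i) (ε : ℝ) (hε : 0 < ε)
    (hlower : ∀ x : H, ε * ‖x‖ ^ 2 ≤ ((inner ℂ ((∑ i, (α i : ℂ) • proj (H_ i)) x) x : ℂ)).re)
    (ξ : Fin n → H) (hξ : ∀ i, ξ i ∈ H_ i) :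
    ε * ∑ i, ‖ξ i‖ ^ 2 ≤ ‖∑ i, ((Real.sqrt (α i) : ℝ) : ℂ) • ξ i‖ ^ 2 := by
  classical
  set E := PiLp 2 (fun i : Fin n => ↥(H_ i)) with hE
  haveI : CompleteSpace E := by
    have e : E ≃ᵤ ∀ i : Fin n, ↥(H_ i) :=
      { toEquiv := WithLp.equiv 2 _,
        uniformContinuous_toFun := PiLp.uniformContinuous_ofLp 2 _,
        uniformContinuous_invFun := PiLp.uniformContinuous_toLp 2 _ }
    exact e.completeSpace_iff.mpr inferInstance
  -- the synthesis map T and its adjoint S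
  set T : E →L[ℂ] H :=
    ∑ i, ((Real.sqrt (α i) : ℂ) • ((H_ i).subtypeL.comp (PiLp.proj 2 (fun i => ↥(H_ i)) i)))
    with hTdef
  set S : H →L[ℂ] E :=
    ((PiLp.continuousLinearEquiv 2 ℂ (fun i : Fin n => ↥(H_ i))).symm :
        (∀ i, ↥(H_ i)) →L[ℂ] E).comp
      (ContinuousLinearMap.pi fun i =>
        (Real.sqrt (α i) : ℂ) • ((H_ i).orthogonalProjection : H →L[ℂ] ↥(H_ i)))
    with hSdef
  have hT : ∀ η : E, T η = ∑ i, ((Real.sqrt (α i) : ℂ)) • (η i : H) := by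
    intro η
    simp only [hTdef, ContinuousLinearMap.sum_apply, ContinuousLinearMap.smul_apply,
      ContinuousLinearMap.coe_comp', Function.comp_apply, Submodule.subtypeL_apply,
      PiLp.proj_apply]
    rfl
  have hS : ∀ (x : H) (i : Fin n),
      (S x) i = (Real.sqrt (α i) : ℂ) • (H_ i).orthogonalProjection x := by
    intro x i
    simp [hSdef]
  have hadj : ∀ (x : H) (η : E), (inner ℂ (S x) η : ℂ) = inner ℂ x (T η) := by
    intro x η
    rw [PiLp.inner_apply, hT, inner_sum]
    refine Finset.sum_congr rfl (fun i _ => ?_)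
    rw [hS, inner_smul_left, inner_smul_right, Complex.conj_ofReal]
    congr 1
    exact Submodule.inner_orthogonalProjection_eq_of_mem_right (K := H_ i) (η i) x
  have hSlow : ∀ x : H, Real.sqrt ε * ‖x‖ ≤ ‖S x‖ := by
    intro x
    have h1 : ‖S x‖ ^ 2 = ∑ i, α i * ‖((H_ i).orthogonalProjection x : H)‖ ^ 2 := by
      rw [PiLp.norm_sq_eq_of_L2]
      refine Finset.sum_congr rfl (fun i _ => ?_)
      rw [hS, norm_smul]
      simp [mul_pow, Real.sq_sqrt (le_of_lt (hα i))]
    have h2 := hlower x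
    rw [re_inner_sum H_ α x] at h2
    have h3 : ε * ‖x‖ ^ 2 ≤ ‖S x‖ ^ 2 := by rw [h1]; exact h2
    have h4 := Real.sqrt_le_sqrt h3
    rwa [Real.sqrt_mul (le_of_lt hε), Real.sqrt_sq (norm_nonneg _),
      Real.sqrt_sq (norm_nonneg _)] at h4
  have hTinj : ∀ η : E, T η = 0 → η = 0 := by
    intro η h0
    rw [hT] at h0
    have hmem : ∀ i, ((Real.sqrt (α i) : ℂ) • (η i : H)) ∈ H_ i :=
      fun i => Submodule.smul_mem _ _ (η i).2
    have hz := hind _ hmem h0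
    refine PiLp.ext fun i => ?_
    have h2 := hz i
    rw [smul_eq_zero] at h2
    have hsne : ((Real.sqrt (α i) : ℝ) : ℂ) ≠ 0 := by
      simp only [ne_eq, Complex.ofReal_eq_zero]
      exact ne_of_gt (Real.sqrt_pos.mpr (hα i))
    rcases h2 with h2 | h2
    · exact absurd h2 hsne
    · exact Subtype.ext h2
  have hεpos : (0:ℝ) < Real.sqrt ε := Real.sqrt_pos.mpr hε
  have hxbound : ∀ x : H, ‖x‖ ≤ (Real.sqrt ε)⁻¹ * ‖S x‖ := by
    intro x
    rw [inv_mul_eq_div, le_div_iff₀ hεpos]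
    nlinarith [hSlow x]
  have hsurj : ∀ η : E, ∃ x : H, S x = η := by
    have hanti : AntilipschitzWith (⟨(Real.sqrt ε)⁻¹, inv_nonneg.mpr (le_of_lt hεpos)⟩ : NNReal) S :=
      ContinuousLinearMap.antilipschitz_of_bound S (fun x => hxbound x)
    have hclosed : IsClosed (Set.range S) := hanti.isClosed_range S.uniformContinuous
    set K : Submodule ℂ E := LinearMap.range (S : H →ₗ[ℂ] E) with hK
    have hKset : (K : Set E) = Set.range S := by
      rw [hK]
      exact LinearMap.coe_range _
    haveI : CompleteSpace K := by
      have : IsClosed (K : Set E) := by rw [hKset]; exact hclosed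
      exact this.completeSpace_coe
    have hbot : Kᗮ = ⊥ := by
      rw [Submodule.eq_bot_iff]
      intro η hη
      rw [Submodule.mem_orthogonal] at hη
      have h0 : T η = 0 := by
        have hx : ∀ x : H, (inner ℂ x (T η) : ℂ) = 0 := fun x => by
          rw [← hadj]; exact hη (S x) ⟨x, rfl⟩
        have := hx (T η)
        rwa [inner_self_eq_zero] at this
      exact hTinj η h0
    have htop : K = ⊤ := Submodule.orthogonal_eq_bot_iff.mp hbot
    intro η
    have : η ∈ K := htop ▸ Submodule.mem_top
    exact this
  set η : E := (WithLp.equiv 2 (∀ i, ↥(H_ i))).symm (fun i => (⟨ξ i, hξ i⟩ : H_ i)) with hηdef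
  have hηi : ∀ i, (η i : H) = ξ i := fun i => rfl
  have hηnorm : ‖η‖ ^ 2 = ∑ i, ‖ξ i‖ ^ 2 := by
    rw [PiLp.norm_sq_eq_of_L2]
    refine Finset.sum_congr rfl (fun i _ => ?_)
    rw [← hηi i]
    rfl
  have hTη : T η = ∑ i, ((Real.sqrt (α i) : ℝ) : ℂ) • ξ i := by
    rw [hT]
    exact Finset.sum_congr rfl fun i _ => by rw [hηi i]
  have key : Real.sqrt ε * ‖η‖ ≤ ‖T η‖ := by
    rcases eq_or_ne η 0 with h0 | h0
    · simp [h0]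
    · obtain ⟨x, hx⟩ := hsurj η
      have h1 : ((‖η‖ ^ 2 : ℝ) : ℂ) = inner ℂ x (T η) := by
        rw [← hadj, hx, inner_self_eq_norm_sq_to_K]
        norm_cast
      have h2 : ‖η‖ ^ 2 ≤ ‖x‖ * ‖T η‖ := by
        calc ‖η‖ ^ 2 = ((‖η‖ ^ 2 : ℝ) : ℂ).re := by rw [Complex.ofReal_re]
        _ = (inner ℂ x (T η) : ℂ).re := by rw [h1]
        _ ≤ ‖(inner ℂ x (T η) : ℂ)‖ := Complex.re_le_norm _
        _ ≤ ‖x‖ * ‖T η‖ := norm_inner_le_norm x (T η)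
      have h3 : ‖x‖ ≤ (Real.sqrt ε)⁻¹ * ‖η‖ := by
        have := hxbound x
        rwa [hx] at this
      have hηpos : 0 < ‖η‖ := norm_pos_iff.mpr h0
      have h4 : ‖η‖ ^ 2 ≤ (Real.sqrt ε)⁻¹ * ‖η‖ * ‖T η‖ := by
        refine le_trans h2 ?_
        have := mul_le_mul_of_nonneg_right h3 (norm_nonneg (T η))
        linarith
      have h6 : Real.sqrt ε * ‖η‖ ^ 2 ≤ ‖η‖ * ‖T η‖ := by
        have h5 := mul_le_mul_of_nonneg_left h4 (le_of_lt hεpos)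
        calc Real.sqrt ε * ‖η‖ ^ 2
            ≤ Real.sqrt ε * ((Real.sqrt ε)⁻¹ * ‖η‖ * ‖T η‖) := h5
        _ = ‖η‖ * ‖T η‖ := by field_simp
      have h7 : ‖η‖ * (Real.sqrt ε * ‖η‖) ≤ ‖η‖ * ‖T η‖ := by
        calc ‖η‖ * (Real.sqrt ε * ‖η‖) = Real.sqrt ε * ‖η‖ ^ 2 := by ring
        _ ≤ ‖η‖ * ‖T η‖ := h6
      exact le_of_mul_le_mul_left h7 hηpos
  have keysq : ε * ‖η‖ ^ 2 ≤ ‖T η‖ ^ 2 := by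
    have h6 : (Real.sqrt ε * ‖η‖) ^ 2 ≤ ‖T η‖ ^ 2 := by
      apply pow_le_pow_left₀ (by positivity) key
    rwa [mul_pow, Real.sq_sqrt (le_of_lt hε)] at h6
  rw [← hηnorm, ← hTη]
  exact keysq

lemma alpha_ge (hne : ∀ i, H_ i ≠ ⊥) (α : Fin n → ℝ) (ε : ℝ)
    (hL0 : ∀ ξ : Fin n → H, (∀ i, ξ i ∈ H_ i) →
      ε * ∑ i, ‖ξ i‖ ^ 2 ≤ ‖∑ i, ((Real.sqrt (α i) : ℝ) : ℂ) • ξ i‖ ^ 2)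
    (hα : ∀ i, 0 < α i) (j : Fin n) : ε ≤ α j := by
  classical
  obtain ⟨u, hu_mem, hu_ne⟩ := (Submodule.ne_bot_iff (H_ j)).mp (hne j)
  set ζ : Fin n → H := Function.update (fun _ => (0:H)) j u with hζ
  have hmem : ∀ i, ζ i ∈ H_ i := by
    intro i
    rcases eq_or_ne i j with h | h
    · subst h; simp [hζ]; exact hu_mem
    · simp [hζ, Function.update_of_ne h]
  have h1 : ∑ i, ‖ζ i‖ ^ 2 = ‖u‖ ^ 2 := by
    have := Finset.sum_eq_single (s := Finset.univ) (f := fun i => ‖ζ i‖ ^ 2) j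
      (fun i _ h => by simp [hζ, Function.update_of_ne h])
      (fun h => absurd (Finset.mem_univ j) h)
    rw [this, hζ]
    simp
  have h2 : ∑ i, ((Real.sqrt (α i) : ℝ) : ℂ) • ζ i = ((Real.sqrt (α j) : ℝ) : ℂ) • u := by
    rw [show (∑ i, ((Real.sqrt (α i) : ℝ) : ℂ) • ζ i)
        = ∑ i, (fun i => ((Real.sqrt (α i) : ℝ) : ℂ) • ζ i) i from rfl]
    rw [Finset.sum_eq_single j]
    · simp [hζ]
    · intro i _ h; simp [hζ, Function.update_of_ne h]
    · intro h; exact absurd (Finset.mem_univ j) h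
  have h3 := hL0 ζ hmem
  rw [h1, h2] at h3
  have h4 : ‖((Real.sqrt (α j) : ℝ) : ℂ) • u‖ ^ 2 = α j * ‖u‖ ^ 2 := by
    rw [norm_smul]
    simp [mul_pow, Real.sq_sqrt (le_of_lt (hα j)), abs_of_nonneg (Real.sqrt_nonneg _)]
  rw [h4] at h3
  have hu_pos : 0 < ‖u‖ ^ 2 := pow_pos (norm_pos_iff.mpr hu_ne) 2
  exact le_of_mul_le_mul_right (by linarith) hu_pos

lemma L1 (hne : ∀ i, H_ i ≠ ⊥) (α : Fin n → ℝ) (hα : ∀ i, 0 < α i) (ε : ℝ) (hε : 0 < ε)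
    (hL0 : ∀ ξ : Fin n → H, (∀ i, ξ i ∈ H_ i) →
      ε * ∑ i, ‖ξ i‖ ^ 2 ≤ ‖∑ i, ((Real.sqrt (α i) : ℝ) : ℂ) • ξ i‖ ^ 2)
    (ξ : Fin n → H) (hξ : ∀ i, ξ i ∈ H_ i) :
    ‖∑ i, ((Real.sqrt (α i) : ℝ) : ℂ) • ξ i‖ ^ 2
      ≤ (∑ i, α i - ((n:ℝ) - 1) * ε) * ∑ i, ‖ξ i‖ ^ 2 := by
  classical
  have hαε : ∀ j, ε ≤ α j := alpha_ge H_ hne α ε hL0 hα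
  set w : Fin n → H := fun j => ((Real.sqrt (α j) : ℝ) : ℂ) • ξ j with hw
  set v : H := ∑ i, w i with hv
  set V : ℝ := ‖v‖ ^ 2 with hV
  set b : Fin n → ℝ := fun j => ‖ξ j‖ ^ 2 with hb
  set Sn : ℝ := ∑ i, b i with hSn
  set a : Fin n → ℝ := fun j => (inner ℂ v (w j) : ℂ).re with ha
  set W : ℝ := V - ε * Sn with hW
  have hb_nonneg : ∀ j, (0:ℝ) ≤ b j := fun j => sq_nonneg _
  have hSn_nonneg : 0 ≤ Sn := Finset.sum_nonneg fun i _ => hb_nonneg i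
  have hW_nonneg : 0 ≤ W := by
    have h := hL0 ξ hξ
    have h2 : ε * Sn ≤ V := h
    rw [hW]
    linarith
  have hsum_a : ∑ j, a j = V := by
    have hvv : (inner ℂ v v : ℂ) = ∑ j, (inner ℂ v (w j) : ℂ) := by
      nth_rewrite 2 [hv]
      rw [inner_sum]
    have h := inner_self_eq_norm_sq (𝕜 := ℂ) v
    rw [hvv, map_sum] at h
    rw [hV, ← h]
    exact Finset.sum_congr rfl fun j _ => by simp [ha, RCLike.re_to_complex]
  have hnorm_w : ∀ j, ‖w j‖ ^ 2 = α j * b j := by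
    intro j
    simp only [hw, hb]
    rw [norm_smul, Complex.norm_real, Real.norm_eq_abs, abs_of_nonneg (Real.sqrt_nonneg _),
      mul_pow, Real.sq_sqrt (le_of_lt (hα j))]
  have quad : ∀ j, ∀ lam : ℝ,
      0 ≤ ((α j - ε) * b j) * (lam * lam) + (-2 * (a j - ε * b j)) * lam + W := by
    intro j lam
    set ξ' : Fin n → H := Function.update ξ j ((((1 - lam : ℝ)) : ℂ) • ξ j) with hξ'
    have hmem' : ∀ i, ξ' i ∈ H_ i := by
      intro i
      rcases eq_or_ne i j with h | h
      · rw [hξ', h, Function.update_self]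
        exact Submodule.smul_mem _ _ (hξ j)
      · rw [hξ', Function.update_of_ne h]
        exact hξ i
    have he : ∀ i ∈ Finset.univ.erase j, ξ' i = ξ i := fun i hi => by
      rw [hξ', Function.update_of_ne (Finset.mem_erase.mp hi).1]
    have hs1 : ∑ i, ‖ξ' i‖ ^ 2 = (1 - lam) ^ 2 * b j + (Sn - b j) := by
      have hsplit1 : ∑ i, ‖ξ' i‖ ^ 2
          = ‖ξ' j‖ ^ 2 + ∑ i ∈ Finset.univ.erase j, ‖ξ' i‖ ^ 2 :=
        (Finset.add_sum_erase _ _ (Finset.mem_univ j)).symm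
      have hsplit2 : Sn = b j + ∑ i ∈ Finset.univ.erase j, b i :=
        (Finset.add_sum_erase _ _ (Finset.mem_univ j)).symm
      have e1 : ‖ξ' j‖ ^ 2 = (1 - lam) ^ 2 * b j := by
        rw [hξ', Function.update_self, norm_smul, Complex.norm_real, Real.norm_eq_abs]
        simp only [hb, mul_pow, sq_abs]
      have e2 : ∑ i ∈ Finset.univ.erase j, ‖ξ' i‖ ^ 2
          = ∑ i ∈ Finset.univ.erase j, b i := by
        refine Finset.sum_congr rfl fun i hi => ?_
        rw [he i hi]
      rw [hsplit1, e1, e2]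
      rw [hsplit2]
      try ring
    have hs2 : ∑ i, ((Real.sqrt (α i) : ℝ) : ℂ) • ξ' i = v - (lam : ℂ) • w j := by
      have hsplit3 : ∑ i, ((Real.sqrt (α i) : ℝ) : ℂ) • ξ' i
          = ((Real.sqrt (α j) : ℝ) : ℂ) • ξ' j
            + ∑ i ∈ Finset.univ.erase j, ((Real.sqrt (α i) : ℝ) : ℂ) • ξ' i :=
        (Finset.add_sum_erase _ _ (Finset.mem_univ j)).symm
      have hsplit4 : v = w j + ∑ i ∈ Finset.univ.erase j, w i :=
        (Finset.add_sum_erase _ _ (Finset.mem_univ j)).symm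
      have e3 : ∑ i ∈ Finset.univ.erase j, ((Real.sqrt (α i) : ℝ) : ℂ) • ξ' i
          = ∑ i ∈ Finset.univ.erase j, w i := by
        refine Finset.sum_congr rfl fun i hi => ?_
        rw [he i hi]
      rw [hsplit3, e3, hsplit4, hξ', Function.update_self]
      simp only [hw]
      rw [smul_smul, smul_smul]
      push_cast
      try module
      try ring_nf
      try module
    have h3 := hL0 ξ' hmem'
    rw [hs1, hs2] at h3
    have h4 : ‖(lam : ℂ) • w j‖ ^ 2 = lam ^ 2 * ‖w j‖ ^ 2 := by
      rw [norm_smul]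
      simp [mul_pow, sq_abs]
    have hexp : ‖v - (lam : ℂ) • w j‖ ^ 2
        = V - 2 * (lam * a j) + lam ^ 2 * (α j * b j) := by
      have hn := @norm_sub_sq ℂ _ _ _ _ v ((lam : ℂ) • w j)
      rw [inner_smul_right, h4, hnorm_w j] at hn
      rw [hn, hV]
      have h5 : RCLike.re ((lam : ℂ) * (inner ℂ v (w j) : ℂ)) = lam * a j := by
        simp [ha, RCLike.re_to_complex, Complex.mul_re]
      rw [h5]
      try ring
    rw [hexp] at h3
    nlinarith [h3]
  have disc : ∀ j, (a j - ε * b j) ^ 2 ≤ ((α j - ε) * b j) * W := by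
    intro j
    have := discrim_le_zero (quad j)
    rw [discrim] at this
    nlinarith [this]
  have hbound : ∀ j, a j - ε * b j ≤ Real.sqrt ((α j - ε) * b j) * Real.sqrt W := by
    intro j
    have hAnn : 0 ≤ (α j - ε) * b j := mul_nonneg (by linarith [hαε j]) (hb_nonneg j)
    calc a j - ε * b j ≤ |a j - ε * b j| := le_abs_self _
    _ = Real.sqrt ((a j - ε * b j) ^ 2) := (Real.sqrt_sq_eq_abs _).symm
    _ ≤ Real.sqrt (((α j - ε) * b j) * W) := Real.sqrt_le_sqrt (disc j)
    _ = Real.sqrt ((α j - ε) * b j) * Real.sqrt W := Real.sqrt_mul hAnn _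
  set M : ℝ := ∑ j, (α j - ε) with hM
  have hM_nonneg : 0 ≤ M := Finset.sum_nonneg fun j _ => by linarith [hαε j]
  have hCS : ∑ j, Real.sqrt ((α j - ε) * b j) ≤ Real.sqrt (M * Sn) := by
    have hsq : (∑ j, Real.sqrt ((α j - ε) * b j)) ^ 2 ≤ M * Sn :=
      Finset.sum_sq_le_sum_mul_sum_of_sq_eq_mul Finset.univ
        (fun j _ => by linarith [hαε j]) (fun j _ => hb_nonneg j)
        (fun j _ => Real.sq_sqrt (mul_nonneg (by linarith [hαε j]) (hb_nonneg j)))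
    have hsum_nonneg : 0 ≤ ∑ j, Real.sqrt ((α j - ε) * b j) :=
      Finset.sum_nonneg fun j _ => Real.sqrt_nonneg _
    exact (Real.le_sqrt hsum_nonneg (mul_nonneg hM_nonneg hSn_nonneg)).mpr hsq
  have hWsum : W = ∑ j, (a j - ε * b j) := by
    rw [Finset.sum_sub_distrib, hsum_a, ← Finset.mul_sum]
    try rw [hW, hSn]
    try rfl
  have hWbound : W ≤ Real.sqrt (M * Sn) * Real.sqrt W := by
    calc W = ∑ j, (a j - ε * b j) := hWsum
    _ ≤ ∑ j, Real.sqrt ((α j - ε) * b j) * Real.sqrt W :=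
        Finset.sum_le_sum fun j _ => hbound j
    _ = (∑ j, Real.sqrt ((α j - ε) * b j)) * Real.sqrt W := by rw [Finset.sum_mul]
    _ ≤ Real.sqrt (M * Sn) * Real.sqrt W :=
        mul_le_mul_of_nonneg_right hCS (Real.sqrt_nonneg _)
  have hMS : W ≤ M * Sn := by
    rcases eq_or_lt_of_le hW_nonneg with h0 | h0
    · rw [← h0]
      exact mul_nonneg hM_nonneg hSn_nonneg
    · have hsW : 0 < Real.sqrt W := Real.sqrt_pos.mpr h0
      have h2 : Real.sqrt W * Real.sqrt W ≤ Real.sqrt (M * Sn) * Real.sqrt W := by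
        rw [Real.mul_self_sqrt hW_nonneg]
        exact hWbound
      have h3 : Real.sqrt W ≤ Real.sqrt (M * Sn) := le_of_mul_le_mul_right h2 hsW
      calc W = Real.sqrt W ^ 2 := (Real.sq_sqrt hW_nonneg).symm
      _ ≤ Real.sqrt (M * Sn) ^ 2 := by nlinarith [Real.sqrt_nonneg W]
      _ = M * Sn := Real.sq_sqrt (mul_nonneg hM_nonneg hSn_nonneg)
  have hfin : ∑ i, α i - ((n:ℝ) - 1) * ε = M + ε := by
    rw [hM, Finset.sum_sub_distrib, Finset.sum_const, Finset.card_univ, Fintype.card_fin,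
      nsmul_eq_mul]
    ring
  have hgoal : V ≤ (∑ i, α i - ((n:ℝ) - 1) * ε) * Sn := by
    rw [hfin]
    have h1 : (M + ε) * Sn = M * Sn + ε * Sn := by ring
    have h2 : W = V - ε * Sn := hW
    linarith [hMS]
  exact hgoal


end Aux

/-- If `H₁, …, Hₙ` are nonzero linearly independent closed subspaces and
`α₁P₁ + … + αₙPₙ ≥ ε·I` (in the sense of quadratic forms), then
`α₁P₁ + … + αₙPₙ ≤ (Σ α_i − (n−1)ε)·I`. -/
theorem stmt15 {H : Type*} [NormedAddCommGroup H] [InnerProductSpace ℂ H] [CompleteSpace H]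
    {n : ℕ} (H_ : Fin n → Submodule ℂ H) [∀ i, CompleteSpace (H_ i)]
    (hne : ∀ i, H_ i ≠ ⊥)
    (hind : ∀ x : Fin n → H, (∀ i, x i ∈ H_ i) → ∑ i, x i = 0 → ∀ i, x i = 0)
    (α : Fin n → ℝ) (hα : ∀ i, 0 < α i) (ε : ℝ) (hε : 0 < ε)
    (hlower : ∀ x : H, ε * ‖x‖ ^ 2 ≤ ((inner ℂ ((∑ i, (α i : ℂ) • proj (H_ i)) x) x : ℂ)).re) :
    ∀ x : H, ((inner ℂ ((∑ i, (α i : ℂ) • proj (H_ i)) x) x : ℂ)).re ≤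
      (∑ i, α i - ((n : ℝ) - 1) * ε) * ‖x‖ ^ 2 := by
  intro x
  have hL0 : ∀ ξ : Fin n → H, (∀ i, ξ i ∈ H_ i) →
      ε * ∑ i, ‖ξ i‖ ^ 2 ≤ ‖∑ i, ((Real.sqrt (α i) : ℝ) : ℂ) • ξ i‖ ^ 2 :=
    fun ξ hξ => L0 H_ hind α hα ε hε hlower ξ hξ
  set P : Fin n → H := fun i => ((H_ i).orthogonalProjection x : H) with hP
  set ξ : Fin n → H := fun i => ((Real.sqrt (α i) : ℝ) : ℂ) • P i with hξdef
  have hmem : ∀ i, ξ i ∈ H_ i := by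
    intro i
    have h1 : ξ i = ((Real.sqrt (α i) : ℝ) : ℂ) • P i := rfl
    rw [h1]
    exact Submodule.smul_mem _ _ ((H_ i).orthogonalProjection x).2
  have hd : ((inner ℂ ((∑ i, (α i : ℂ) • proj (H_ i)) x) x : ℂ)).re
      = ∑ i, α i * ‖P i‖ ^ 2 := re_inner_sum H_ α x
  have hnormξ : ∀ i, ‖ξ i‖ ^ 2 = α i * ‖P i‖ ^ 2 := by
    intro i
    have h1 : ξ i = ((Real.sqrt (α i) : ℝ) : ℂ) • P i := rfl
    rw [h1, norm_smul, Complex.norm_real, Real.norm_eq_abs,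
      abs_of_nonneg (Real.sqrt_nonneg _), mul_pow, Real.sq_sqrt (le_of_lt (hα i))]
  have hy : ∑ i, ((Real.sqrt (α i) : ℝ) : ℂ) • ξ i = (∑ i, (α i : ℂ) • proj (H_ i)) x := by
    simp only [ContinuousLinearMap.sum_apply, ContinuousLinearMap.smul_apply]
    refine Finset.sum_congr rfl fun i _ => ?_
    have h1 : ξ i = ((Real.sqrt (α i) : ℝ) : ℂ) • P i := rfl
    have h2 : proj (H_ i) x = P i := rfl
    rw [h1, h2, smul_smul, ← Complex.ofReal_mul, Real.mul_self_sqrt (le_of_lt (hα i))]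
  set d : ℝ := ∑ i, α i * ‖P i‖ ^ 2 with hdd
  set C : ℝ := ∑ i, α i - ((n : ℝ) - 1) * ε with hC
  set y : H := (∑ i, (α i : ℂ) • proj (H_ i)) x with hy2
  have hsumξ : ∑ i, ‖ξ i‖ ^ 2 = d := Finset.sum_congr rfl fun i _ => hnormξ i
  have hyb : ‖y‖ ^ 2 ≤ C * d := by
    have h := L1 H_ hne α hα ε hε hL0 ξ hmem
    rw [hy, hsumξ] at h
    exact h
  have hαε : ∀ j, ε ≤ α j := alpha_ge H_ hne α ε hL0 hα
  have hC_pos : 0 < C := by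
    have hsum : (n : ℝ) * ε ≤ ∑ i, α i := by
      calc (n : ℝ) * ε = ∑ _i : Fin n, ε := by
            rw [Finset.sum_const, Finset.card_univ, Fintype.card_fin, nsmul_eq_mul]
      _ ≤ ∑ i, α i := Finset.sum_le_sum fun i _ => hαε i
    rw [hC]
    nlinarith [hsum, hε]
  have hd_nonneg : 0 ≤ d := Finset.sum_nonneg fun i _ => mul_nonneg (le_of_lt (hα i)) (sq_nonneg _)
  have hdrey : ((inner ℂ y x : ℂ)).re = d := hd
  rw [show ((inner ℂ ((∑ i, (α i : ℂ) • proj (H_ i)) x) x : ℂ)).re = ((inner ℂ y x : ℂ)).re from rfl,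
    hdrey]
  have hre : ((inner ℂ y x : ℂ)).re ≤ ‖y‖ * ‖x‖ := by
    have h1 := Complex.re_le_norm (inner ℂ y x : ℂ)
    exact le_trans h1 (norm_inner_le_norm y x)
  rw [hdrey] at hre
  rcases eq_or_lt_of_le hd_nonneg with h0 | h0
  · rw [← h0]
    positivity
  · nlinarith [hyb, hre, norm_nonneg x, norm_nonneg y, h0, sq_nonneg (‖y‖ - ‖x‖)]
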